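/- Let E be a finite set of edges with values d_e ∈ [0,1], let t_1, …, t_σ ⊆ E be σ ≥ 2 subsets (the minimal Steiner trees of the instance) with associated integers r_1, …, r_σ ≥ 2 satisfying Σ_{e ∈ t_j} d_e ≥ r_j − 1 for every j. Let c > 0 be a constant such that α := 1/(c · ln σ) satisfies α ≤ 1/4, and let C ⊆ E be the random edge set obtained by including each edge e independently with probability min(1, d_e/α). Then the probability that some t_j contains fewer than r_j − 1 edges of C is at most e^4 / σ^{c/2 − 1}; equivalently, with probability at least 1 − e^4 · σ^{1 − c/2}, every t_j contains at least r_j − 1 edges of C. -/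

import Mathlib

open MeasureTheory ProbabilityTheory Real

/-- Union bound for randomized rounding: with `σ ≥ 2` minimal Steiner trees
`t_1, …, t_σ`, requirements `r_j ≥ 2` with `Σ_{e ∈ t_j} d e ≥ r_j - 1`, and threshold
`α = 1/(c · ln σ) ≤ 1/4`, the probability that some `t_j` contains fewer than `r_j - 1`
selected edges is at most `e^4 / σ^(c/2 - 1)`. -/
theorem stmt9 {E : Type*} [Fintype E] [DecidableEq E] {Ω : Type*} [MeasurableSpace Ω]
    (μ : Measure Ω) [IsProbabilityMeasure μ]
    (d : E → ℝ) (hd0 : ∀ e, 0 ≤ d e) (hd1 : ∀ e, d e ≤ 1)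
    (σ : ℕ) (hσ : 2 ≤ σ)
    (t : Fin σ → Finset E) (r : Fin σ → ℕ) (hr : ∀ j, 2 ≤ r j)
    (ht : ∀ j, ((r j : ℝ) - 1) ≤ ∑ e ∈ t j, d e)
    (c : ℝ) (hc : 0 < c) (α : ℝ) (hα : α = 1 / (c * Real.log σ)) (hα4 : α ≤ 1 / 4)
    (Z : E → Ω → Bool)
    (hZmeas : ∀ e, Measurable (Z e))
    (hZindep : iIndepFun Z μ)
    (hZprob : ∀ e, (μ {ω | Z e ω = true}).toReal = min 1 (d e / α)) :
    (μ {ω | ∃ j, (((t j).filter fun e => Z e ω = true).card : ℝ) < (r j : ℝ) - 1}).toReal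
      ≤ exp 4 / (σ : ℝ) ^ (c / 2 - 1) := by
  classical
  set L : ℝ := c * Real.log σ with hLdef
  have hσ1 : (1 : ℝ) < (σ : ℝ) := by exact_mod_cast Nat.lt_of_lt_of_le one_lt_two hσ
  have hlog : 0 < Real.log σ := Real.log_pos hσ1
  have hL0 : 0 < L := mul_pos hc hlog
  have hL4 : 4 ≤ L := by
    have : 1 / L ≤ 1 / 4 := hα ▸ hα4
    rw [div_le_div_iff₀ hL0 (by norm_num)] at this
    linarith
  set lam : ℝ := -(L / 2) with hlam
  have hlam2 : lam ≤ -2 := by rw [hlam]; linarith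
  have hlam0 : lam ≤ 0 := by linarith
  have hexplam : exp lam ≤ 1 / 2 := by
    have h2 : (2 : ℝ) ≤ exp 2 := by nlinarith [add_one_le_exp (2 : ℝ)]
    have h3 : exp lam ≤ exp (-2 : ℝ) := exp_le_exp.mpr hlam2
    have h4 : exp (-2 : ℝ) = (exp 2)⁻¹ := Real.exp_neg 2
    have h5 : (exp 2)⁻¹ ≤ 2⁻¹ := inv_anti₀ (by norm_num) h2
    rw [h4] at h3
    calc exp lam ≤ (exp 2)⁻¹ := h3
      _ ≤ 1 / 2 := by rw [one_div]; exact h5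
  -- probabilities
  have hda : ∀ e, d e / α = d e * L := by
    intro e
    rw [hα, div_div_eq_mul_div, div_one, mul_comm]
  -- the real-valued indicator variables
  set X : E → Ω → ℝ := fun e ω => if Z e ω then 1 else 0 with hX
  have hXmeas : ∀ e, Measurable (X e) := by
    intro e
    exact (measurable_from_top (f := fun b : Bool => if b then (1:ℝ) else 0)).comp (hZmeas e)
  have hXindep : iIndepFun X μ :=
    hZindep.comp (fun _ b => if b then (1:ℝ) else 0) fun _ => measurable_from_top
  have hAmeas : ∀ e, MeasurableSet {ω | Z e ω = true} :=
    fun e => (hZmeas e) (measurableSet_singleton true)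
  -- mgf of each indicator
  have hmgf_int : ∀ e (u : ℝ), Integrable (fun ω => exp (u * X e ω)) μ := by
    intro e u
    have : (fun ω => exp (u * X e ω)) =
        fun ω => 1 + Set.indicator {ω | Z e ω = true} (fun _ => exp u - 1) ω := by
      funext ω
      by_cases h : Z e ω <;> simp [hX, h, Set.indicator]
    rw [this]
    exact (integrable_const 1).add ((integrable_const (exp u - 1)).indicator (hAmeas e))
  have hmgf_e : ∀ e, mgf (X e) μ lam = 1 + min 1 (d e * L) * (exp lam - 1) := by
    intro e
    have heq : (fun ω => exp (lam * X e ω)) =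
        fun ω => 1 + Set.indicator {ω | Z e ω = true} (fun _ => exp lam - 1) ω := by
      funext ω
      by_cases h : Z e ω <;> simp [hX, h, Set.indicator]
    rw [mgf, heq, integral_add (integrable_const 1)
      ((integrable_const (exp lam - 1)).indicator (hAmeas e)),
      integral_const, integral_indicator_const _ (hAmeas e)]
    have hp := hZprob e
    rw [hda e] at hp
    simp [measure_univ, measureReal_def, hp, mul_comm]
  -- key per-edge inequality
  have hkey : ∀ e, mgf (X e) μ lam ≤ exp (lam * d e) := by
    intro e
    rw [hmgf_e e]
    rcases le_or_gt 1 (d e * L) with h | h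
    · rw [min_eq_left h]
      have : exp lam ≤ exp (lam * d e) := by
        apply exp_le_exp.mpr
        nlinarith [hd0 e, hd1 e]
      linarith
    · rw [min_eq_right h.le]
      have h1 : lam * d e + 1 ≤ exp (lam * d e) := add_one_le_exp _
      have h2 : 0 ≤ d e * L := mul_nonneg (hd0 e) hL0.le
      have : 1 + d e * L * (exp lam - 1) ≤ 1 + lam * d e := by
        rw [hlam]
        nlinarith [exp_pos lam]
      linarith
  -- events
  set A : Fin σ → Set Ω :=
    fun j => {ω | (((t j).filter fun e => Z e ω = true).card : ℝ) < (r j : ℝ) - 1} with hA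
  have hcard : ∀ j (ω : Ω),
      (((t j).filter fun e => Z e ω = true).card : ℝ) = (∑ e ∈ t j, X e) ω := by
    intro j ω
    rw [Finset.card_filter]
    push_cast
    rw [Finset.sum_apply]
  have hAeq : ∀ j, A j = {ω | (∑ e ∈ t j, X e) ω ≤ ((r j : ℝ) - 2)} := by
    intro j
    ext ω
    have hrj := hr j
    simp only [hA, Set.mem_setOf_eq]
    rw [← hcard j ω]
    have e1 : ((r j : ℝ) - 1) = ((r j - 1 : ℕ) : ℝ) := by
      rw [Nat.cast_sub (by omega)]; norm_num
    have e2 : ((r j : ℝ) - 2) = ((r j - 2 : ℕ) : ℝ) := by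
      rw [Nat.cast_sub (hr j)]; norm_num
    rw [e1, e2, Nat.cast_lt, Nat.cast_le]
    omega
  -- Chernoff bound for each j
  have hj : ∀ j, (μ (A j)).toReal ≤ (σ : ℝ) ^ (-(c / 2)) := by
    intro j
    have hint : Integrable (fun ω => exp (lam * (∑ e ∈ t j, X e) ω)) μ := by
      apply Integrable.mono' (integrable_const 1)
      · apply Measurable.aestronglyMeasurable
        apply Measurable.exp
        apply Measurable.const_mul
        have : (∑ e ∈ t j, X e) = fun ω => ∑ e ∈ t j, X e ω := by
          funext ω; rw [Finset.sum_apply]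
        rw [this]
        exact Finset.measurable_sum _ fun e _ => hXmeas e
      · filter_upwards with ω
        rw [norm_of_nonneg (exp_pos _).le, ← exp_zero]
        apply exp_le_exp.mpr
        rw [Finset.sum_apply]
        have : 0 ≤ ∑ e ∈ t j, X e ω := by
          apply Finset.sum_nonneg
          intro e _
          by_cases h : Z e ω <;> simp [hX, h]
        nlinarith
    have hch := measure_le_le_exp_mul_mgf (μ := μ) (X := ∑ e ∈ t j, X e)
      ((r j : ℝ) - 2) hlam0 hint
    rw [hAeq j]
    refine hch.trans ?_
    have hprod : mgf (∑ e ∈ t j, X e) μ lam = ∏ e ∈ t j, mgf (X e) μ lam :=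
      hXindep.mgf_sum hXmeas (t j)
    have hprodle : ∏ e ∈ t j, mgf (X e) μ lam ≤ exp (lam * ((r j : ℝ) - 1)) := by
      calc ∏ e ∈ t j, mgf (X e) μ lam ≤ ∏ e ∈ t j, exp (lam * d e) := by
            apply Finset.prod_le_prod
            · intro e _; exact mgf_nonneg
            · intro e _; exact hkey e
        _ = exp (∑ e ∈ t j, lam * d e) := (Real.exp_sum _ _).symm
        _ = exp (lam * ∑ e ∈ t j, d e) := by rw [← Finset.mul_sum]
        _ ≤ exp (lam * ((r j : ℝ) - 1)) := by
            apply exp_le_exp.mpr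
            exact mul_le_mul_of_nonpos_left (ht j) hlam0
    calc exp (-lam * ((r j : ℝ) - 2)) * mgf (∑ e ∈ t j, X e) μ lam
        ≤ exp (-lam * ((r j : ℝ) - 2)) * exp (lam * ((r j : ℝ) - 1)) := by
          apply mul_le_mul_of_nonneg_left _ (exp_pos _).le
          rw [hprod]; exact hprodle
      _ = exp lam := by rw [← exp_add]; ring_nf
      _ = (σ : ℝ) ^ (-(c / 2)) := by
          rw [Real.rpow_def_of_pos (by linarith : (0:ℝ) < (σ:ℝ))]
          congr 1
          rw [hlam, hLdef]; ring
  -- union bound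
  have hunion : {ω | ∃ j, (((t j).filter fun e => Z e ω = true).card : ℝ) < (r j : ℝ) - 1}
      = ⋃ j, A j := by
    ext ω; simp [hA]
  rw [hunion]
  have h1 : μ (⋃ j, A j) ≤ ∑ j, μ (A j) := measure_iUnion_fintype_le _ _
  have h2 : (μ (⋃ j, A j)).toReal ≤ ∑ j, (μ (A j)).toReal := by
    rw [← ENNReal.toReal_sum (fun j _ => measure_ne_top μ _)]
    exact ENNReal.toReal_mono (ENNReal.sum_ne_top.mpr fun j _ => measure_ne_top μ _) h1
  refine h2.trans ?_
  have h3 : ∑ j : Fin σ, (μ (A j)).toReal ≤ ∑ j : Fin σ, (σ : ℝ) ^ (-(c / 2)) :=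
    Finset.sum_le_sum fun j _ => hj j
  refine h3.trans ?_
  rw [Finset.sum_const, Finset.card_univ, Fintype.card_fin, nsmul_eq_mul]
  have hσ0 : (0 : ℝ) < (σ : ℝ) := by linarith
  have hpow : (σ : ℝ) * (σ : ℝ) ^ (-(c / 2)) * (σ : ℝ) ^ (c / 2 - 1) = 1 := by
    have e := Real.rpow_add hσ0 (-(c / 2)) (c / 2 - 1)
    have e2 : -(c / 2) + (c / 2 - 1) = -1 := by ring
    rw [mul_assoc, ← e, e2, Real.rpow_neg_one]
    field_simp
  rw [le_div_iff₀ (Real.rpow_pos_of_pos hσ0 _), hpow]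
  nlinarith [add_one_le_exp (4 : ℝ)]
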